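/- arXiv:2512.19076 — 5 statements merged into one kernel-verified Lean document; each statement's English description precedes it below -/
import Mathlib

section
/- Let h ∈ ℤ[x₁,…,xₙ] be a polynomial that is the sum of at most w monomials, let X₁,…,Xₙ > 0 and M > 0 be integers, and let (y₁,…,yₙ) ∈ ℤⁿ. Suppose (1) h(y₁,…,yₙ) ≡ 0 (mod M) and |yᵢ| < Xᵢ for all 1 ≤ i ≤ n, and (2) the Euclidean norm of the coefficient vector of h(x₁X₁,…,xₙXₙ), i.e. the square root of the sum over all monomials x₁^{e₁}⋯xₙ^{eₙ} in the support of h of (coeff(h, e)·X₁^{e₁}⋯Xₙ^{eₙ})², is strictly less than M/√w. Then h(y₁,…,yₙ) = 0 in ℤ. -/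
open Finset

/-- Howgrave-Graham's lemma: if a multivariate integer polynomial `h` with at most `w`
monomials vanishes modulo `M` at a point `y` with `|y i| < X i`, and the Euclidean norm of
the coefficient vector of `h (x₁X₁, …, xₙXₙ)` is less than `M / √w`, then `h(y) = 0` in `ℤ`. -/
theorem howgrave_graham (n w : ℕ) (h : MvPolynomial (Fin n) ℤ)
    (hw : h.support.card ≤ w)
    (X : Fin n → ℤ) (hX : ∀ i, 0 < X i) (M : ℤ) (hM : 0 < M)
    (y : Fin n → ℤ)
    (h1 : M ∣ MvPolynomial.eval y h)
    (h2 : ∀ i, |y i| < X i)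
    (h3 : Real.sqrt (∑ e ∈ h.support,
            (((h.coeff e : ℤ) : ℝ) * ∏ i, (X i : ℝ) ^ (e i)) ^ 2)
          < (M : ℝ) / Real.sqrt w) :
    MvPolynomial.eval y h = 0 := by
  rcases Nat.eq_zero_or_pos w with hw0 | hwpos
  · subst hw0
    have hs : h.support = ∅ := Finset.card_eq_zero.mp (Nat.le_zero.mp hw)
    have : h = 0 := MvPolynomial.support_eq_empty.mp hs
    simp [this]
  · apply Int.eq_zero_of_abs_lt_dvd h1
    have hcast : (|MvPolynomial.eval y h| : ℝ) < (M : ℝ) → |MvPolynomial.eval y h| < M := by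
      exact_mod_cast id
    apply hcast
    set a : (Fin n →₀ ℕ) → ℝ := fun e => |((h.coeff e : ℤ) : ℝ)| * ∏ i, (X i : ℝ) ^ (e i) with ha
    have haP : ∀ e : Fin n →₀ ℕ, 0 ≤ ∏ i, (X i : ℝ) ^ (e i) := fun e =>
      Finset.prod_nonneg fun i _ => pow_nonneg (by exact_mod_cast (hX i).le) _
    have hanneg : ∀ e, 0 ≤ a e := fun e => mul_nonneg (abs_nonneg _) (haP e)
    have hstep1 : (|MvPolynomial.eval y h| : ℝ) ≤ ∑ e ∈ h.support, a e := by
      rw [MvPolynomial.eval_eq']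
      push_cast
      refine (Finset.abs_sum_le_sum_abs _ _).trans (Finset.sum_le_sum fun e _ => ?_)
      rw [abs_mul]
      refine mul_le_mul_of_nonneg_left ?_ (abs_nonneg _)
      rw [Finset.abs_prod]
      refine Finset.prod_le_prod (fun i _ => abs_nonneg _) fun i _ => ?_
      rw [abs_pow]
      refine pow_le_pow_left₀ (abs_nonneg _) ?_ _
      exact_mod_cast (h2 i).le
    have hsq : ∑ e ∈ h.support, (a e) ^ 2
        = ∑ e ∈ h.support, (((h.coeff e : ℤ) : ℝ) * ∏ i, (X i : ℝ) ^ (e i)) ^ 2 := by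
      refine Finset.sum_congr rfl fun e _ => ?_
      have : a e = |((h.coeff e : ℤ) : ℝ) * ∏ i, (X i : ℝ) ^ (e i)| := by
        rw [abs_mul, abs_of_nonneg (haP e)]
      rw [this, sq_abs]
    have hcs : (∑ e ∈ h.support, a e) ^ 2
        ≤ (w : ℝ) * ∑ e ∈ h.support, (a e) ^ 2 := by
      refine (sq_sum_le_card_mul_sum_sq).trans ?_
      have hcw : (h.support.card : ℝ) ≤ w := by exact_mod_cast hw
      exact mul_le_mul_of_nonneg_right hcw (Finset.sum_nonneg fun e _ => sq_nonneg _)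
    have hswpos : (0:ℝ) < Real.sqrt w := Real.sqrt_pos.mpr (by exact_mod_cast hwpos)
    have hS : ∑ e ∈ h.support, (((h.coeff e : ℤ) : ℝ) * ∏ i, (X i : ℝ) ^ (e i)) ^ 2
        < ((M : ℝ) / Real.sqrt w) ^ 2 := by
      have hnn : (0:ℝ) ≤ ∑ e ∈ h.support, (((h.coeff e : ℤ) : ℝ) * ∏ i, (X i : ℝ) ^ (e i)) ^ 2 :=
        Finset.sum_nonneg fun e _ => sq_nonneg _
      calc _ = Real.sqrt (∑ e ∈ h.support,
              (((h.coeff e : ℤ) : ℝ) * ∏ i, (X i : ℝ) ^ (e i)) ^ 2) ^ 2 :=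
            (Real.sq_sqrt hnn).symm
        _ < _ := by
            apply pow_lt_pow_left₀ h3 (Real.sqrt_nonneg _)
            norm_num
    have hM2 : (w : ℝ) * ((M : ℝ) / Real.sqrt w) ^ 2 = (M : ℝ) ^ 2 := by
      rw [div_pow, Real.sq_sqrt (by positivity : (0:ℝ) ≤ (w:ℝ))]
      field_simp
    have hfin : (∑ e ∈ h.support, a e) ^ 2 < (M : ℝ) ^ 2 := by
      calc (∑ e ∈ h.support, a e) ^ 2 ≤ (w : ℝ) * ∑ e ∈ h.support, (a e) ^ 2 := hcs
        _ = (w : ℝ) * ∑ e ∈ h.support,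
              (((h.coeff e : ℤ) : ℝ) * ∏ i, (X i : ℝ) ^ (e i)) ^ 2 := by rw [hsq]
        _ < (w : ℝ) * ((M : ℝ) / Real.sqrt w) ^ 2 := by
            apply mul_lt_mul_of_pos_left hS
            exact_mod_cast hwpos
        _ = (M : ℝ) ^ 2 := hM2
    have hsumlt : ∑ e ∈ h.support, a e < (M : ℝ) := by
      by_contra hcon
      push_neg at hcon
      exact absurd hfin (not_lt.mpr (pow_le_pow_left₀ (by exact_mod_cast hM.le) hcon 2))
    exact hstep1.trans_lt hsumlt
end

section
/- Let N, m, j be positive integers with gcd(j,m) = 1, 1 ≤ j ≤ m, gcd(m,N) = 1, and let β be a real number with 1/3 ≤ β ≤ 1/2 and 72 < m < N^{(1−β)/2}/2. Let minv be an integer with m·minv ≡ 1 (mod N), set t = (m·minv − 1)/N, p̃ = j·minv, and X = ⌊N^β/m⌋. Let L ⊆ ℤ³ be the lattice generated by the rows (N, 0, 0), (p̃, X, 0), (p̃², 2p̃X, X²). Then v₀ := (j, mX, 0) satisfies v₀ = −tj·(N,0,0) + m·(p̃, X, 0), so v₀ ∈ L, and every nonzero vector v ∈ L with ‖v‖ ≤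 ‖v₀‖ is an integer multiple of v₀; in particular, v₀ is a shortest nonzero vector of L. -/
open Finset

set_option maxHeartbeats 4000000 in
/-- The shortest-vector part of Lemma 4.4: in the rank-3 lattice generated by the rows
`(N,0,0)`, `(p̃, X, 0)`, `(p̃², 2p̃X, X²)` with `p̃ = j·minv`, `X = ⌊N^β/m⌋`, the vector
`v₀ = (j, mX, 0)` lies in the lattice (explicitly `v₀ = −tj·(N,0,0) + m·(p̃,X,0)`), and every
nonzero lattice vector of Euclidean norm at most `‖v₀‖` is an integer multiple of `v₀`. -/
theorem shortest_vector_rank3_lattice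
    (N m j minv t X : ℤ) (β : ℝ)
    (hN : 0 < N) (hm : 0 < m) (hj1 : 1 ≤ j) (hjm : j ≤ m)
    (hgcdjm : Int.gcd j m = 1) (hgcdmN : Int.gcd m N = 1)
    (hβl : 1 / 3 ≤ β) (hβu : β ≤ 1 / 2)
    (hm72 : 72 < m) (hmupper : (m : ℝ) < (N : ℝ) ^ ((1 - β) / 2) / 2)
    (hminv : m * minv = 1 + t * N)
    (hX : X = ⌊(N : ℝ) ^ β / (m : ℝ)⌋) :
    (![j, m * X, 0] : Fin 3 → ℤ) =
        (-(t * j)) • (![N, 0, 0] : Fin 3 → ℤ) + m • ![j * minv, X, 0] ∧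
    (![j, m * X, 0] : Fin 3 → ℤ) ∈ Submodule.span ℤ
        ({![N, 0, 0], ![j * minv, X, 0],
          ![(j * minv) ^ 2, 2 * (j * minv) * X, X ^ 2]} : Set (Fin 3 → ℤ)) ∧
    ∀ v ∈ Submodule.span ℤ
        ({![N, 0, 0], ![j * minv, X, 0],
          ![(j * minv) ^ 2, 2 * (j * minv) * X, X ^ 2]} : Set (Fin 3 → ℤ)),
      v ≠ 0 →
      Real.sqrt (∑ i, ((v i : ℤ) : ℝ) ^ 2) ≤
        Real.sqrt (∑ i, (((![j, m * X, 0] : Fin 3 → ℤ) i : ℤ) : ℝ) ^ 2) →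
      ∃ k : ℤ, v = k • (![j, m * X, 0] : Fin 3 → ℤ) := by
  -- Part 1: the explicit linear combination
  have hpart1 : (![j, m * X, 0] : Fin 3 → ℤ) =
      (-(t * j)) • (![N, 0, 0] : Fin 3 → ℤ) + m • ![j * minv, X, 0] := by
    funext i
    fin_cases i <;>
      · simp [Matrix.cons_val_zero, Matrix.cons_val_one, Matrix.head_cons]
        try linear_combination (-j) * hminv
  refine ⟨hpart1, ?_, ?_⟩
  · rw [hpart1]
    refine Submodule.add_mem _ (Submodule.smul_mem _ _ (Submodule.subset_span ?_))
      (Submodule.smul_mem _ _ (Submodule.subset_span ?_)) <;> simp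
  -- Part 3: shortest vector
  intro v hv hvne hnorm
  -- real preliminaries
  have hN1 : (1:ℝ) ≤ (N:ℝ) := by exact_mod_cast hN
  have hNpos : (0:ℝ) < N := by linarith
  have hmR : (0:ℝ) < m := by exact_mod_cast hm
  have hAle : (N:ℝ) ^ ((1 - β) / 2) ≤ (N:ℝ) ^ β :=
    Real.rpow_le_rpow_of_exponent_le hN1 (by linarith)
  have h2m : 2 * (m:ℝ) < (N:ℝ) ^ β := by linarith
  have hX2 : (2:ℤ) ≤ X := by
    rw [hX, Int.le_floor, le_div_iff₀ hmR]
    push_cast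
    linarith
  have hmX : (m:ℝ) * X ≤ (N:ℝ) ^ β := by
    have h := Int.floor_le ((N:ℝ) ^ β / (m:ℝ))
    rw [← hX] at h
    calc (m:ℝ) * X ≤ (m:ℝ) * ((N:ℝ) ^ β / m) :=
          mul_le_mul_of_nonneg_left h (le_of_lt hmR)
      _ = (N:ℝ) ^ β := by field_simp
  have hNsplit : (N:ℝ) ^ (1 - β) * (N:ℝ) ^ β = N := by
    rw [← Real.rpow_add hNpos]; norm_num
  have hm2 : (m:ℝ)^2 < (N:ℝ) ^ (1 - β) / 4 := by
    have hA0 : (0:ℝ) ≤ (N:ℝ) ^ ((1 - β) / 2) := Real.rpow_nonneg (le_of_lt hNpos) _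
    have hsq : ((N:ℝ) ^ ((1 - β) / 2))^2 = (N:ℝ) ^ (1 - β) := by
      rw [← Real.rpow_natCast ((N:ℝ) ^ ((1 - β) / 2)) 2, ← Real.rpow_mul (le_of_lt hNpos)]
      norm_num
    nlinarith
  have hm2N : (m:ℝ)^2 * (N:ℝ) ^ β < (N:ℝ) / 4 := by
    have hb0 : (0:ℝ) < (N:ℝ) ^ β := Real.rpow_pos_of_pos hNpos _
    nlinarith
  have hm3 : (m:ℝ)^3 < (N:ℝ) / 8 := by
    have hA0 : (0:ℝ) ≤ (N:ℝ) ^ ((1 - β) / 2) := Real.rpow_nonneg (le_of_lt hNpos) _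
    have h3 : ((N:ℝ) ^ ((1 - β) / 2))^3 = (N:ℝ) ^ (3 * (1 - β) / 2) := by
      rw [← Real.rpow_natCast ((N:ℝ) ^ ((1 - β) / 2)) 3, ← Real.rpow_mul (le_of_lt hNpos)]
      ring_nf
    have hle1 : (N:ℝ) ^ (3 * (1 - β) / 2) ≤ (N:ℝ) := by
      calc (N:ℝ) ^ (3 * (1 - β) / 2) ≤ (N:ℝ) ^ (1:ℝ) :=
            Real.rpow_le_rpow_of_exponent_le hN1 (by linarith)
        _ = N := Real.rpow_one _
    nlinarith
  -- decompose v
  rw [show ({![N, 0, 0], ![j * minv, X, 0],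
          ![(j * minv) ^ 2, 2 * (j * minv) * X, X ^ 2]} : Set (Fin 3 → ℤ)) =
      insert ![N, 0, 0] (insert ![j * minv, X, 0]
        {![(j * minv) ^ 2, 2 * (j * minv) * X, X ^ 2]}) from rfl,
    Submodule.mem_span_insert] at hv
  obtain ⟨a, w1, hw1, hveq⟩ := hv
  rw [Submodule.mem_span_insert] at hw1
  obtain ⟨b, w2, hw2, hw1eq⟩ := hw1
  rw [Submodule.mem_span_singleton] at hw2
  obtain ⟨c, hw2eq⟩ := hw2
  have e0 : v 0 = a * N + b * (j * minv) + c * (j * minv)^2 := by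
    rw [hveq, hw1eq, ← hw2eq]
    simp [Matrix.cons_val_zero, Matrix.cons_val_one, Matrix.head_cons]
    try ring
  have e1 : v 1 = (b + 2 * c * (j * minv)) * X := by
    rw [hveq, hw1eq, ← hw2eq]
    simp [Matrix.cons_val_zero, Matrix.cons_val_one, Matrix.head_cons]
    try ring
  have e2 : v 2 = c * X^2 := by
    rw [hveq, hw1eq, ← hw2eq]
    simp [Matrix.cons_val_zero, Matrix.cons_val_one, Matrix.head_cons]
    try ring
  set B : ℤ := b + 2 * c * (j * minv) with hBdef
  -- the integer norm inequality
  have hIsum : (v 0)^2 + (v 1)^2 + (v 2)^2 ≤ j^2 + (m*X)^2 := by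
    have h0 : (0:ℝ) ≤ ∑ i, (((![j, m * X, 0] : Fin 3 → ℤ) i : ℤ) : ℝ) ^ 2 := by positivity
    have h := (Real.sqrt_le_sqrt_iff h0).mp hnorm
    rw [Fin.sum_univ_three, Fin.sum_univ_three] at h
    norm_num [Matrix.cons_val_zero, Matrix.cons_val_one, Matrix.head_cons,
      Matrix.cons_val_two, Matrix.tail_cons] at h
    exact_mod_cast h
  have hj2 : j^2 ≤ m^2 := by nlinarith
  have hjpos : (0:ℤ) < j := by linarith
  have hX4 : (4:ℤ) ≤ X^2 := by nlinarith
  have hXpos : (0:ℤ) < X^2 := by linarith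
  have hv1sq : (v 1)^2 = B^2 * X^2 := by rw [e1]; ring
  have hv2sq : (v 2)^2 = c^2 * (X^2*X^2) := by rw [e2]; ring
  have hmXsq : (m*X)^2 = m^2 * X^2 := by ring
  have f2 : m^2*4 ≤ m^2*X^2 := mul_le_mul_of_nonneg_left hX4 (sq_nonneg m)
  have h4X : 4*X^2 ≤ X^2*X^2 :=  by
    nlinarith [mul_nonneg (sub_nonneg.mpr hX4) (le_of_lt hXpos)]
  have f1 : m^2*(4*X^2) ≤ m^2*(X^2*X^2) := mul_le_mul_of_nonneg_left h4X (sq_nonneg m)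
  -- individual bounds
  have habs0 : |v 0| ≤ m + m * X := by
    refine abs_le_of_sq_le_sq ?_ (by nlinarith)
    nlinarith [sq_nonneg (v 1), sq_nonneg (v 2)]
  have hB2 : B^2 * X^2 ≤ j^2 + m^2*X^2 := by
    rw [hmXsq] at hIsum
    linarith [hv1sq, sq_nonneg (v 0), sq_nonneg (v 2), hIsum]
  have habsB : |B| ≤ 2 * m := by
    refine abs_le_of_sq_le_sq ?_ (by linarith)
    have h5 : B^2 * X^2 ≤ (2*m)^2 * X^2 := by nlinarith [sq_nonneg m, sq_nonneg B]
    exact le_of_mul_le_mul_right h5 hXpos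
  have habsc : |c| < m := by
    have hc2 : (c^2) * (X^2*X^2) ≤ j^2 + m^2*X^2 := by
      rw [hmXsq] at hIsum
      linarith [hv2sq, sq_nonneg (v 0), sq_nonneg (v 1), hIsum]
    have h5 : (c^2) * (X^2*X^2) < (m^2) * (X^2*X^2) := by
      nlinarith [f1, f2, hj2, sq_nonneg m, hm]
    have h6 : c^2 < m^2 := lt_of_mul_lt_mul_right h5 (by positivity)
    have h7 : |c|^2 < m^2 := by rwa [sq_abs]
    exact lt_of_pow_lt_pow_left₀ 2 (le_of_lt hm) h7
  -- the key identity
  have hE : m^2 * (v 0) - m*j*B + j^2*c = N * (m^2*a + m*b*j*t + c*j^2*t^2*N) := by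
    rw [e0, hBdef]
    linear_combination (m*b*j + c*j^2*(m*minv + 1 + t*N) - 2*c*j^2) * hminv
  -- bound |E| < N
  have hEtri : |m^2 * (v 0) - m*j*B + j^2*c| ≤ m^2*|v 0| + m*j*|B| + j^2*|c| := by
    calc |m^2 * (v 0) - m*j*B + j^2*c| ≤ |m^2 * (v 0) - m*j*B| + |j^2*c| := abs_add_le _ _
      _ ≤ |m^2 * (v 0)| + |m*j*B| + |j^2*c| := by linarith [abs_sub (m^2 * (v 0)) (m*j*B)]
      _ = m^2*|v 0| + m*j*|B| + j^2*|c| := by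
          simp [abs_mul, abs_pow, abs_of_pos hm, abs_of_pos hjpos]
  have hEint : |m^2 * (v 0) - m*j*B + j^2*c| ≤ 4*m^3 + m^2*(m*X) := by
    have b1 : m^2*|v 0| ≤ m^2*(m + m*X) := mul_le_mul_of_nonneg_left habs0 (sq_nonneg m)
    have b2a : m*j*|B| ≤ m*j*(2*m) := mul_le_mul_of_nonneg_left habsB (by positivity)
    have b2 : m*j*(2*m) ≤ 2*m^3 := by
      have := mul_le_mul_of_nonneg_left hjm (by positivity : (0:ℤ) ≤ 2*m^2)
      linarith
    have b3a : j^2*|c| ≤ j^2*m := mul_le_mul_of_nonneg_left (le_of_lt habsc) (by positivity)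
    have b3 : j^2*m ≤ m^3 := by
      have := mul_le_mul_of_nonneg_right hj2 (le_of_lt hm)
      linarith
    have expand : m^2*(m + m*X) = m^3 + m^2*(m*X) := by ring
    linarith
  have hEreal : (|m^2 * (v 0) - m*j*B + j^2*c| : ℝ) < N := by
    have hcast : ((4*m^3 + m^2*(m*X) : ℤ) : ℝ) = 4*(m:ℝ)^3 + (m:ℝ)^2*((m:ℝ)*X) := by
      push_cast; ring
    have h1 : (|m^2 * (v 0) - m*j*B + j^2*c| : ℝ) ≤ 4*(m:ℝ)^3 + (m:ℝ)^2*((m:ℝ)*X) := by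
      rw [← hcast]; exact_mod_cast hEint
    have h2 : (m:ℝ)^2*((m:ℝ)*X) ≤ (m:ℝ)^2 * (N:ℝ)^β :=
      mul_le_mul_of_nonneg_left hmX (sq_nonneg _)
    linarith
  have hEltN : |m^2 * (v 0) - m*j*B + j^2*c| < N := by exact_mod_cast hEreal
  -- the combination coefficient is zero
  have hk0 : m^2*a + m*b*j*t + c*j^2*t^2*N = 0 := by
    by_contra h
    have h1 : 1 ≤ |m^2*a + m*b*j*t + c*j^2*t^2*N| := Int.one_le_abs h
    rw [hE, abs_mul, abs_of_pos hN] at hEltN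
    nlinarith [mul_le_mul_of_nonneg_left h1 (le_of_lt hN)]
  have hE0 : m^2 * (v 0) - m*j*B + j^2*c = 0 := by rw [hE, hk0, mul_zero]
  -- coprimality arguments
  have hco : IsCoprime (m:ℤ) j := by
    rw [Int.isCoprime_iff_gcd_eq_one, Int.gcd_comm]; exact hgcdjm
  have hc0 : c = 0 := by
    have hdvd : m ∣ j^2 * c := ⟨j*B - m*(v 0), by linear_combination hE0⟩
    exact Int.eq_zero_of_abs_lt_dvd ((hco.pow_right).dvd_of_dvd_mul_left hdvd) habsc
  have hmv0 : m * (v 0) = j * B := by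
    have h : m * (m * (v 0)) = m * (j * B) := by linear_combination hE0 - j^2 * hc0
    exact mul_left_cancel₀ (by positivity) h
  have hdvdB : m ∣ B := hco.dvd_of_dvd_mul_left ⟨v 0, hmv0.symm⟩
  obtain ⟨k, hkB⟩ := hdvdB
  have hv0k : v 0 = j * k := by
    have h : m * (v 0) = m * (j * k) := by rw [hmv0, hkB]; ring
    exact mul_left_cancel₀ (by positivity) h
  refine ⟨k, funext fun i => ?_⟩
  fin_cases i
  · show v 0 = k * j
    rw [hv0k]; ring
  · show v 1 = k * (m * X)
    rw [e1, hkB]; ring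
  · show v 2 = k * 0
    rw [e2, hc0]; ring
end

section
/- Let N, m, j be positive integers with gcd(j,m) = 1, 1 ≤ j ≤ m, gcd(m,N) = 1, and let β be a real number with 1/3 ≤ β ≤ 1/2 and 72 < m < N^{(1−β)/2}/2. Let minv be an integer with m·minv ≡ 1 (mod N), p̃ = j·minv, and X = ⌊N^β/m⌋. Let L ⊆ ℤ³ be the lattice generated by the rows (N, 0, 0), (p̃, X, 0), (p̃², 2p̃X, X²). Then every vector v ∈ L whose third coordinate is zero and which satisfies ‖v‖ < 2·3^{3/4}·N^{1/2+β}/m^{3/2} is an integer multiple of (j, mX, 0). In particular, any vector of L that is linearly independent from (j, mX, 0) and has Euclidean norm less than 2·3^{3/4}·N^{1/2+β}/m^{3/2} has nonzero third coordinate. -/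
open Finset

private lemma sqrt_sum_bound (w : Fin 3 → ℤ) (Bd : ℝ)
    (h : Real.sqrt (∑ i, ((w i : ℤ) : ℝ) ^ 2) < Bd) (i0 : Fin 3) :
    |((w i0 : ℤ) : ℝ)| < Bd := by
  have h1 : ((w i0 : ℤ):ℝ)^2 ≤ ∑ i, ((w i : ℤ):ℝ)^2 :=
    Finset.single_le_sum (f := fun i => ((w i : ℤ):ℝ)^2) (fun i _ => sq_nonneg _)
      (Finset.mem_univ i0)
  calc |((w i0 : ℤ):ℝ)| = Real.sqrt (((w i0 : ℤ):ℝ)^2) := (Real.sqrt_sq_eq_abs _).symm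
    _ ≤ Real.sqrt (∑ i, ((w i : ℤ):ℝ)^2) := Real.sqrt_le_sqrt h1
    _ < Bd := h

set_option maxHeartbeats 1000000 in
/-- The second part of Lemma 4.4: in the rank-3 lattice generated by `(N,0,0)`,
`(p̃, X, 0)`, `(p̃², 2p̃X, X²)` with `p̃ = j·minv`, `X = ⌊N^β/m⌋`, every lattice vector with
zero third coordinate and Euclidean norm `< 2·3^{3/4}·N^{1/2+β}/m^{3/2}` is an integer
multiple of `v₀ = (j, mX, 0)`; in particular any lattice vector of norm below this bound
that is linearly independent from `v₀` has nonzero third coordinate. -/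
theorem second_vector_nonzero_third_coordinate
    (N m j minv t X : ℤ) (β : ℝ)
    (hN : 0 < N) (hm : 0 < m) (hj1 : 1 ≤ j) (hjm : j ≤ m)
    (hgcdjm : Int.gcd j m = 1) (hgcdmN : Int.gcd m N = 1)
    (hβl : 1 / 3 ≤ β) (hβu : β ≤ 1 / 2)
    (hm72 : 72 < m) (hmupper : (m : ℝ) < (N : ℝ) ^ ((1 - β) / 2) / 2)
    (hminv : m * minv = 1 + t * N)
    (hX : X = ⌊(N : ℝ) ^ β / (m : ℝ)⌋) :
    (∀ v ∈ Submodule.span ℤ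
        ({![N, 0, 0], ![j * minv, X, 0],
          ![(j * minv) ^ 2, 2 * (j * minv) * X, X ^ 2]} : Set (Fin 3 → ℤ)),
      v 2 = 0 →
      Real.sqrt (∑ i, ((v i : ℤ) : ℝ) ^ 2) <
        2 * (3 : ℝ) ^ ((3 : ℝ) / 4) * (N : ℝ) ^ (1 / 2 + β) / (m : ℝ) ^ ((3 : ℝ) / 2) →
      ∃ k : ℤ, v = k • (![j, m * X, 0] : Fin 3 → ℤ)) ∧
    (∀ v ∈ Submodule.span ℤ
        ({![N, 0, 0], ![j * minv, X, 0],
          ![(j * minv) ^ 2, 2 * (j * minv) * X, X ^ 2]} : Set (Fin 3 → ℤ)),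
      Real.sqrt (∑ i, ((v i : ℤ) : ℝ) ^ 2) <
        2 * (3 : ℝ) ^ ((3 : ℝ) / 4) * (N : ℝ) ^ (1 / 2 + β) / (m : ℝ) ^ ((3 : ℝ) / 2) →
      LinearIndependent ℤ ![v, (![j, m * X, 0] : Fin 3 → ℤ)] →
      v 2 ≠ 0) := by
  have hNr0 : (0:ℝ) < (N:ℝ) := by exact_mod_cast hN
  have hmr0 : (0:ℝ) < (m:ℝ) := by exact_mod_cast hm
  have hmr72 : (72:ℝ) < (m:ℝ) := by exact_mod_cast hm72
  set K : ℝ := (3:ℝ) ^ ((3:ℝ)/4) with hKdef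
  have hK0 : 0 < K := Real.rpow_pos_of_pos (by norm_num) _
  have hK23 : K < 2.3 := by
    have h1 : K ^ (4:ℕ) = 27 := by
      rw [hKdef, ← Real.rpow_natCast ((3:ℝ) ^ ((3:ℝ)/4)) 4,
        ← Real.rpow_mul (by norm_num : (0:ℝ) ≤ 3)]
      norm_num
    by_contra hc
    push_neg at hc
    have : (2.3:ℝ)^(4:ℕ) ≤ K^(4:ℕ) := pow_le_pow_left₀ (by norm_num) hc 4
    rw [h1] at this; norm_num at this
  set B : ℝ := 2 * K * (N:ℝ) ^ (1/2 + β) / (m:ℝ) ^ ((3:ℝ)/2) with hBdef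
  have hC : 2 * (m:ℝ) < (N:ℝ) ^ ((1-β)/2) := by linarith
  have hmr73 : (73:ℝ) ≤ (m:ℝ) := by exact_mod_cast (by omega : (73:ℤ) ≤ m)
  have hC146 : (146:ℝ) < (N:ℝ) ^ ((1-β)/2) := by linarith
  have hNr1 : 1 < (N:ℝ) := by
    by_contra hc
    push_neg at hc
    have := Real.rpow_le_one hNr0.le hc (by linarith : (0:ℝ) ≤ (1-β)/2)
    linarith
  have hmono : ∀ e1 e2 : ℝ, e1 ≤ e2 → (N:ℝ) ^ e1 ≤ (N:ℝ) ^ e2 :=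
    fun e1 e2 h => Real.rpow_le_rpow_of_exponent_le hNr1.le h
  have hCA : (N:ℝ) ^ ((1-β)/2) ≤ (N:ℝ) ^ β := hmono _ _ (by linarith)
  have hA2m : 2 * (m:ℝ) < (N:ℝ) ^ β := lt_of_lt_of_le hC hCA
  have hA0 : 0 < (N:ℝ) ^ β := Real.rpow_pos_of_pos hNr0 _
  -- X facts
  have hX1 : 1 ≤ X := by
    rw [hX]
    refine Int.le_floor.mpr ?_
    rw [Int.cast_one, le_div_iff₀ hmr0]
    linarith
  have hXr : (N:ℝ) ^ β / (2*(m:ℝ)) < (X:ℝ) := by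
    rw [hX]
    have h2 : (N:ℝ) ^ β / (m:ℝ) - 1 < (⌊(N:ℝ) ^ β / (m:ℝ)⌋ : ℝ) := Int.sub_one_lt_floor _
    have h3 : (1:ℝ) ≤ (N:ℝ)^β/(2*(m:ℝ)) := (one_le_div (by positivity)).mpr hA2m.le
    have h4 : (N:ℝ)^β/(m:ℝ) = (N:ℝ)^β/(2*(m:ℝ)) + (N:ℝ)^β/(2*(m:ℝ)) := by ring
    linarith
  have hXr0 : (0:ℝ) < (X:ℝ) := by exact_mod_cast lt_of_lt_of_le one_pos hX1
  -- sqrt m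
  set s : ℝ := Real.sqrt (m:ℝ) with hsdef
  have hs2 : s^2 = (m:ℝ) := Real.sq_sqrt hmr0.le
  have hsnn : 0 ≤ s := Real.sqrt_nonneg _
  have hs8 : 8 < s := by
    have h64 : (8:ℝ)^2 < s^2 := by rw [hs2]; linarith
    exact lt_of_pow_lt_pow_left₀ 2 hsnn h64
  have hs0 : 0 < s := by linarith
  have hm32 : (m:ℝ) ^ ((3:ℝ)/2) = (m:ℝ) * s := by
    rw [show (3:ℝ)/2 = 1 + 1/2 by norm_num, Real.rpow_add hmr0, Real.rpow_one,
      hsdef, Real.sqrt_eq_rpow]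
  have hB0 : 0 < B := by
    rw [hBdef]
    have h1 := Real.rpow_pos_of_pos hNr0 (1/2+β)
    have h2 := Real.rpow_pos_of_pos hmr0 ((3:ℝ)/2)
    positivity
  -- exponent facts
  have hNhalfβ : (N:ℝ) ^ (1/2 + β) = (N:ℝ) ^ ((1:ℝ)/2) * (N:ℝ) ^ β := Real.rpow_add hNr0 _ _
  have hNle : (N:ℝ) ^ (1/2 + β) ≤ (N:ℝ) := by
    have := hmono (1/2+β) 1 (by linarith)
    rwa [Real.rpow_one] at this
  have hCq : (N:ℝ) ^ ((1-β)/4) * (N:ℝ) ^ ((1-β)/4) = (N:ℝ) ^ ((1-β)/2) := by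
    rw [← Real.rpow_add hNr0]; ring_nf
  have hq0 : 0 < (N:ℝ) ^ ((1-β)/4) := Real.rpow_pos_of_pos hNr0 _
  have hsC : s < (N:ℝ) ^ ((1-β)/4) := by
    have h1 : s^2 < ((N:ℝ) ^ ((1-β)/4))^2 := by
      rw [hs2, sq]
      have := mul_pos hq0 hq0
      linarith
    exact lt_of_pow_lt_pow_left₀ 2 hq0.le h1
  have h23 : (N:ℝ) ^ ((1-β)/4) * (N:ℝ) ^ ((1:ℝ)/2) ≤ (N:ℝ) ^ ((2:ℝ)/3) := by
    rw [← Real.rpow_add hNr0]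
    exact hmono _ _ (by linarith)
  have hthird : (N:ℝ) ^ ((2:ℝ)/3) * (N:ℝ) ^ ((1:ℝ)/3) = (N:ℝ) := by
    rw [← Real.rpow_add hNr0]; norm_num
  have h146 : (146:ℝ) < (N:ℝ) ^ ((1:ℝ)/3) := lt_of_lt_of_le hC146 (hmono _ _ (by linarith))
  have hN23pos : 0 < (N:ℝ) ^ ((2:ℝ)/3) := Real.rpow_pos_of_pos hNr0 _
  have hN23 : (N:ℝ) ^ ((2:ℝ)/3) < (N:ℝ) / 146 := by
    rw [lt_div_iff₀ (by norm_num : (0:ℝ) < 146)]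
    calc (N:ℝ) ^ ((2:ℝ)/3) * 146 < (N:ℝ) ^ ((2:ℝ)/3) * (N:ℝ) ^ ((1:ℝ)/3) :=
          mul_lt_mul_of_pos_left h146 hN23pos
      _ = (N:ℝ) := hthird
  -- the two bound terms
  have hterm1 : (m:ℝ) * B < K * (N:ℝ) / 4 := by
    rw [hBdef, hm32]
    have heq : (m:ℝ) * (2*K*(N:ℝ)^(1/2+β)/((m:ℝ)*s)) = 2*K*(N:ℝ)^(1/2+β)/s := by
      field_simp
    rw [heq, div_lt_iff₀ hs0]
    have g1 : 2*K*(N:ℝ)^(1/2+β) ≤ 2*K*(N:ℝ) :=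
      mul_le_mul_of_nonneg_left hNle (by positivity)
    have g2 : (K*(N:ℝ)/4)*8 < (K*(N:ℝ)/4)*s :=
      mul_lt_mul_of_pos_left hs8 (by positivity)
    linarith
  have hterm2 : 2*(m:ℝ)^2*B/(N:ℝ)^β < 4*(K*(N:ℝ))/146 := by
    have heq : 2*(m:ℝ)^2*B/(N:ℝ)^β = 4*K*s*(N:ℝ)^((1:ℝ)/2) := by
      rw [hBdef, hm32, hNhalfβ, ← hs2]
      field_simp
      ring
    rw [heq]
    have hNh0 : 0 < (N:ℝ)^((1:ℝ)/2) := Real.rpow_pos_of_pos hNr0 _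
    have c1 : (4*K*(N:ℝ)^((1:ℝ)/2))*s < (4*K*(N:ℝ)^((1:ℝ)/2))*((N:ℝ)^((1-β)/4)) :=
      mul_lt_mul_of_pos_left hsC (by positivity)
    have c2 : (4*K)*((N:ℝ)^((1-β)/4)*(N:ℝ)^((1:ℝ)/2)) ≤ (4*K)*((N:ℝ)^((2:ℝ)/3)) :=
      mul_le_mul_of_nonneg_left h23 (by positivity)
    have c3 : (4*K)*((N:ℝ)^((2:ℝ)/3)) < (4*K)*((N:ℝ)/146) :=
      mul_lt_mul_of_pos_left hN23 (by positivity)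
    nlinarith [c1, c2, c3]
  have hKN : K * (N:ℝ) < 2.3 * (N:ℝ) := mul_lt_mul_of_pos_right hK23 hNr0
  have hmain : (m:ℝ)*B + 2*(m:ℝ)^2*B/(N:ℝ)^β < (N:ℝ) := by linarith
  -- main claim
  have main : ∀ v ∈ Submodule.span ℤ
        ({![N, 0, 0], ![j * minv, X, 0],
          ![(j * minv) ^ 2, 2 * (j * minv) * X, X ^ 2]} : Set (Fin 3 → ℤ)),
      v 2 = 0 →
      Real.sqrt (∑ i, ((v i : ℤ) : ℝ) ^ 2) < B →
      ∃ k : ℤ, v = k • (![j, m * X, 0] : Fin 3 → ℤ) := by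
    intro v hv hv2 hnorm
    obtain ⟨a, w1, hw1, hveq⟩ := Submodule.mem_span_insert.mp hv
    obtain ⟨b, w2, hw2, hw1eq⟩ := Submodule.mem_span_insert.mp hw1
    obtain ⟨c, hw2eq⟩ := Submodule.mem_span_singleton.mp hw2
    have hv' : v = a • (![N,0,0] : Fin 3 → ℤ) +
        (b • ![j*minv, X, 0] + c • ![(j*minv)^2, 2*(j*minv)*X, X^2]) := by
      rw [hveq, hw1eq, ← hw2eq]
    have hXne : X ≠ 0 := by omega
    have hc2 : v 2 = c * X^2 := by rw [hv']; simp
    have hc0 : c = 0 := by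
      rw [hv2] at hc2
      rcases mul_eq_zero.mp hc2.symm with h | h
      · exact h
      · exact absurd (pow_eq_zero_iff (by norm_num) |>.mp h) hXne
    subst hc0
    have hv0 : v 0 = a*N + b*(j*minv) := by rw [hv']; simp
    have hv1 : v 1 = b*X := by rw [hv']; simp
    have h0 := sqrt_sum_bound v B hnorm 0
    have h1 := sqrt_sum_bound v B hnorm 1
    rw [hv0] at h0
    rw [hv1] at h1
    set y : ℝ := ((a*N + b*(j*minv) : ℤ) : ℝ) with hy
    -- h1 : |((b*X:ℤ):ℝ)| < B
    have h1' : |(b:ℝ)| * (X:ℝ) < B := by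
      have : ((b*X : ℤ):ℝ) = (b:ℝ) * (X:ℝ) := by push_cast; ring
      rw [this, abs_mul, abs_of_pos hXr0] at h1
      exact h1
    have hbb : |(b:ℝ)| * ((N:ℝ)^β/(2*(m:ℝ))) < B :=
      lt_of_le_of_lt (mul_le_mul_of_nonneg_left hXr.le (abs_nonneg _)) h1'
    have hbN : |(b:ℝ)| * (N:ℝ)^β < B * (2*(m:ℝ)) := by
      have h2m : (0:ℝ) < 2*(m:ℝ) := by linarith
      rw [← mul_div_assoc] at hbb
      exact (div_lt_iff₀ h2m).mp hbb
    have hbm : |(b:ℝ)| * (m:ℝ) < 2*(m:ℝ)^2*B/(N:ℝ)^β := by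
      rw [lt_div_iff₀ hA0]
      nlinarith [abs_nonneg (b:ℝ)]
    have hgoal : |(m:ℝ)*y - (b:ℝ)*(j:ℝ)| < (N:ℝ) := by
      have habs1 : |(m:ℝ)*y - (b:ℝ)*(j:ℝ)| ≤ (m:ℝ) * |y| + |(b:ℝ)| * |(j:ℝ)| := by
        calc |(m:ℝ)*y - (b:ℝ)*(j:ℝ)| = |(m:ℝ)*y + (-((b:ℝ)*(j:ℝ)))| := by ring_nf
          _ ≤ |(m:ℝ)*y| + |(-((b:ℝ)*(j:ℝ)))| := abs_add_le _ _
          _ = (m:ℝ) * |y| + |(b:ℝ)| * |(j:ℝ)| := by rw [abs_neg, abs_mul, abs_mul, abs_of_pos hmr0]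
      have hm_y : (m:ℝ) * |y| < (m:ℝ)*B := mul_lt_mul_of_pos_left h0 hmr0
      have hjabs : |(j:ℝ)| ≤ (m:ℝ) := by
        rw [abs_of_nonneg (by exact_mod_cast (by omega : (0:ℤ) ≤ j) : (0:ℝ) ≤ (j:ℝ))]
        exact_mod_cast hjm
      have hbj : |(b:ℝ)| * |(j:ℝ)| ≤ |(b:ℝ)| * (m:ℝ) := mul_le_mul_of_nonneg_left hjabs (abs_nonneg _)
      linarith
    have hkeyZ : |m * (a*N + b*(j*minv)) - b*j| < N := by
      have hcast : ((m * (a*N + b*(j*minv)) - b*j : ℤ) : ℝ) = (m:ℝ)*y - (b:ℝ)*(j:ℝ) := by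
        rw [hy]; push_cast; ring
      have h' : |((m * (a*N + b*(j*minv)) - b*j : ℤ) : ℝ)| < (N:ℝ) := by
        rw [hcast]; exact hgoal
      rw [← Int.cast_abs] at h'
      exact_mod_cast h'
    have hid : m * (a*N + b*(j*minv)) - b*j = N*(a*m + b*j*t) := by
      linear_combination (b*j) * hminv
    have hz0 : a*m + b*j*t = 0 := by
      by_contra hne
      have h1le : 1 ≤ |a*m + b*j*t| := Int.one_le_abs (by omega)
      rw [hid] at hkeyZ
      rw [abs_mul, abs_of_pos hN] at hkeyZ
      nlinarith
    have hz : m * (a*N + b*(j*minv)) = b*j := by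
      rw [hz0, mul_zero] at hid
      linarith
    have hco : IsCoprime (m:ℤ) j := by
      rw [Int.isCoprime_iff_gcd_eq_one, Int.gcd_comm]
      exact hgcdjm
    have hdvd : m ∣ b := hco.dvd_of_dvd_mul_right ⟨a*N + b*(j*minv), hz.symm⟩
    obtain ⟨k, hk⟩ := hdvd
    refine ⟨k, ?_⟩
    have hv0k : v 0 = k * j := by
      have hmne : (m:ℤ) ≠ 0 := by omega
      apply mul_left_cancel₀ hmne
      rw [hv0, hz, hk]
      ring
    funext i
    fin_cases i
    · simpa using hv0k
    · simp only [Fin.isValue, Pi.smul_apply, smul_eq_mul]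
      show v 1 = k * (![j, m*X, 0] 1)
      rw [hv1, hk]
      simp
      ring
    · simp only [Fin.isValue, Pi.smul_apply, smul_eq_mul]
      show v 2 = k * (![j, m*X, 0] 2)
      rw [hv2]
      simp
  constructor
  · exact main
  · intro v hv hnorm hli hv2
    obtain ⟨k, hk⟩ := main v hv hv2 hnorm
    have := Fintype.linearIndependent_iff.mp hli ![1, -k]
      (by funext i; simp [Fin.sum_univ_two, hk]; fin_cases i <;> simp) 0
    simp at this
end

section
/- Let N = p·q with p prime, let m be a positive integer with gcd(m, N) = 1, and write p = m·x₀ + j with 0 ≤ j < m (so j = p mod m and x₀ = ⌊p/m⌋). Let minv be an integer with m·minv ≡ 1 (mod N), p̃ = j·minv, X a positive integer with |x₀| ≤ X, and let v = (c, bX, aX²) be any element of the lattice generated by (N,0,0), (p̃, X, 0), (p̃², 2p̃X, X²), where a, b, c ∈ ℤ. Then p divides c + b·x₀ + a·x₀², and writing c + b·x₀ + a·x₀² = i·p with i ∈ ℤ, we have (1) |i| ≤ √3·‖v‖/p, and (2) for every integer α with p ∤ α, the class of α raised to the integer power i·m² equals the class of α raised to the integer power c·m² + b·m·(1−j) + a·(1−j)²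 in (ℤ/pℤ)ˣ. -/
lemma zpow_congr_aux {G : Type*} [Group G] (u : G) (n : ℕ) (h1 : u ^ n = 1)
    {x y : ℤ} (hd : (n : ℤ) ∣ x - y) : u ^ x = u ^ y := by
  obtain ⟨k, hk⟩ := hd
  have hx : x = y + (n : ℤ) * k := by linarith
  rw [hx, zpow_add, zpow_mul, zpow_natCast, h1, one_zpow, mul_one]

/-- The key property of giant steps from a rank-3 lattice vector: if `N = p·q` with `p`
prime, `gcd(m,N) = 1`, `p = m·x₀ + j` with `0 ≤ j < m`, `m·minv ≡ 1 (mod N)`, `|x₀| ≤ X`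
with `X > 0`, and `v = (c, bX, aX²)` is a lattice vector, then `p ∣ c + b·x₀ + a·x₀²`;
writing this value as `i·p`, one has `|i| ≤ √3·‖v‖/p`, and for any `α` with `p ∤ α` the
class of `α` raised to `i·m²` equals the class of `α` raised to
`c·m² + b·m·(1−j) + a·(1−j)²` in `(ℤ/pℤ)ˣ`. -/
theorem giant_step_collision
    (p : ℕ) (hp : p.Prime) (N q m j x₀ minv X a b c : ℤ)
    (hN : N = (p : ℤ) * q) (hm : 0 < m) (hgcd : Int.gcd m N = 1)
    (hj0 : 0 ≤ j) (hjm : j < m) (hpd : (p : ℤ) = m * x₀ + j)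
    (hminv : N ∣ m * minv - 1) (hX : 0 < X) (hx₀ : |x₀| ≤ X)
    (hv : (![c, b * X, a * X ^ 2] : Fin 3 → ℤ) ∈ Submodule.span ℤ
          ({![N, 0, 0], ![j * minv, X, 0],
            ![(j * minv) ^ 2, 2 * (j * minv) * X, X ^ 2]} : Set (Fin 3 → ℤ))) :
    (p : ℤ) ∣ c + b * x₀ + a * x₀ ^ 2 ∧
    ∀ i : ℤ, c + b * x₀ + a * x₀ ^ 2 = i * (p : ℤ) →
      (|(i : ℝ)| ≤ Real.sqrt 3 *
          Real.sqrt (((c : ℤ) : ℝ) ^ 2 + ((b * X : ℤ) : ℝ) ^ 2 + ((a * X ^ 2 : ℤ) : ℝ) ^ 2)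
          / (p : ℝ)) ∧
      ∀ α : ℤ, ¬ (p : ℤ) ∣ α →
        ∀ u : (ZMod p)ˣ, (u : ZMod p) = (α : ZMod p) →
          u ^ (i * m ^ 2) = u ^ (c * m ^ 2 + b * m * (1 - j) + a * (1 - j) ^ 2) := by
  -- extract coefficients from the span membership
  rw [Submodule.mem_span_insert] at hv
  obtain ⟨α₁, z₁, hz₁, hveq⟩ := hv
  rw [Submodule.mem_span_insert] at hz₁
  obtain ⟨α₂, z₂, hz₂, hz₁eq⟩ := hz₁
  rw [Submodule.mem_span_singleton] at hz₂
  obtain ⟨α₃, hz₂eq⟩ := hz₂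
  subst hz₂eq hz₁eq
  have h0 := congrFun hveq 0
  have h1 := congrFun hveq 1
  have h2 := congrFun hveq 2
  simp only [Matrix.cons_val_zero, Matrix.cons_val_one, Matrix.head_cons, Pi.add_apply,
    Pi.smul_apply, smul_eq_mul, Matrix.cons_val_two, Matrix.tail_cons] at h0 h1 h2
  have hX0 : (X : ℤ) ≠ 0 := ne_of_gt hX
  have e3 : α₃ = a := by
    have h2' : α₃ * X ^ 2 = a * X ^ 2 := by linear_combination - h2
    exact mul_right_cancel₀ (pow_ne_zero 2 hX0) h2'
  have e2 : α₂ = b - 2 * (j * minv) * a := by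
    rw [e3] at h1
    have h1' : α₂ * X = (b - 2 * (j * minv) * a) * X := by linear_combination - h1
    exact mul_right_cancel₀ hX0 h1'
  have hc : c = α₁ * ((p : ℤ) * q) + (b * (j * minv) - a * (j * minv) ^ 2) := by
    rw [e3, e2, hN] at h0
    linear_combination h0
  obtain ⟨t, ht⟩ := hminv
  -- p divides (j*minv + x₀)
  have hkey : m * (j * minv + x₀) = (p : ℤ) * (1 + j * q * t) := by
    have ht' : m * minv - 1 = (p : ℤ) * q * t := by rw [← hN]; exact ht
    linear_combination j * ht' - hpd
  have hcop : IsCoprime ((p : ℤ)) m := by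
    have h1 : IsCoprime m N := Int.isCoprime_iff_gcd_eq_one.mpr hgcd
    exact (h1.of_isCoprime_of_dvd_right ⟨q, hN⟩).symm
  have hdvd1 : (p : ℤ) ∣ (j * minv + x₀) :=
    hcop.dvd_of_dvd_mul_left ⟨1 + j * q * t, hkey⟩
  obtain ⟨s, hs⟩ := hdvd1
  have hdvd : (p : ℤ) ∣ c + b * x₀ + a * x₀ ^ 2 := by
    refine ⟨α₁ * q + s * (b + a * (x₀ - j * minv)), ?_⟩
    linear_combination hc + (b + a * (x₀ - j * minv)) * hs
  refine ⟨hdvd, ?_⟩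
  intro i hi
  have hppos : (0 : ℝ) < (p : ℝ) := by exact_mod_cast hp.pos
  constructor
  · -- the bound
    have habs : |i * (p : ℤ)| ≤ |c| + |b| * X + |a| * X ^ 2 := by
      rw [← hi]
      have t1 : |c + b * x₀ + a * x₀ ^ 2| ≤ |c| + |b * x₀| + |a * x₀ ^ 2| := by
        calc |c + b * x₀ + a * x₀ ^ 2| ≤ |c + b * x₀| + |a * x₀ ^ 2| := abs_add_le _ _
        _ ≤ |c| + |b * x₀| + |a * x₀ ^ 2| := by linarith [abs_add_le c (b * x₀)]
      have hbx : |b * x₀| ≤ |b| * X := by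
        rw [abs_mul]; exact mul_le_mul_of_nonneg_left hx₀ (abs_nonneg b)
      have hax : |a * x₀ ^ 2| ≤ |a| * X ^ 2 := by
        rw [abs_mul]
        have : |x₀ ^ 2| ≤ X ^ 2 := by
          rw [abs_pow]
          exact pow_le_pow_left₀ (abs_nonneg _) hx₀ 2
        exact mul_le_mul_of_nonneg_left this (abs_nonneg a)
      linarith
    have habsR : |(i : ℝ)| * (p : ℝ) ≤ |(c : ℝ)| + |(b : ℝ)| * X + |(a : ℝ)| * X ^ 2 := by
      have := habs
      rw [abs_mul, abs_of_nonneg (by positivity : (0:ℤ) ≤ (p:ℤ))] at this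
      exact_mod_cast this
    rw [le_div_iff₀ hppos]
    have h3S : Real.sqrt 3 * Real.sqrt (((c : ℤ) : ℝ) ^ 2 + ((b * X : ℤ) : ℝ) ^ 2 + ((a * X ^ 2 : ℤ) : ℝ) ^ 2)
        = Real.sqrt (3 * (((c : ℤ) : ℝ) ^ 2 + ((b * X : ℤ) : ℝ) ^ 2 + ((a * X ^ 2 : ℤ) : ℝ) ^ 2)) := by
      rw [Real.sqrt_mul (by norm_num)]
    rw [h3S]
    rw [show ((b * X : ℤ) : ℝ) = (b : ℝ) * (X : ℝ) by push_cast; ring,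
        show ((a * X ^ 2 : ℤ) : ℝ) = (a : ℝ) * (X : ℝ) ^ 2 by push_cast; ring]
    have hsq : (|(i : ℝ)| * (p : ℝ)) ^ 2
        ≤ 3 * ((c : ℝ) ^ 2 + ((b : ℝ) * (X : ℝ)) ^ 2 + ((a : ℝ) * (X : ℝ) ^ 2) ^ 2) := by
      have hXR : (0 : ℝ) < (X : ℝ) := by exact_mod_cast hX
      have h0' : (0 : ℝ) ≤ |(i : ℝ)| * (p : ℝ) := by positivity
      have hsq1 : (|(i : ℝ)| * (p : ℝ)) ^ 2
          ≤ (|(c : ℝ)| + |(b : ℝ)| * X + |(a : ℝ)| * X ^ 2) ^ 2 :=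
        pow_le_pow_left₀ h0' habsR 2
      have hb2 : (|(b : ℝ)| * X) ^ 2 = ((b : ℝ) * X) ^ 2 := by rw [mul_pow, mul_pow, sq_abs]
      have ha2 : (|(a : ℝ)| * X ^ 2) ^ 2 = ((a : ℝ) * X ^ 2) ^ 2 := by
        rw [mul_pow, mul_pow, sq_abs]
      nlinarith [hsq1, sq_nonneg (|(c : ℝ)| - |(b : ℝ)| * X),
        sq_nonneg (|(c : ℝ)| - |(a : ℝ)| * X ^ 2),
        sq_nonneg (|(b : ℝ)| * X - |(a : ℝ)| * X ^ 2), sq_abs (c : ℝ), hb2, ha2]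
    calc |(i : ℝ)| * (p : ℝ) = Real.sqrt ((|(i : ℝ)| * (p : ℝ)) ^ 2) :=
          (Real.sqrt_sq (by positivity)).symm
      _ ≤ Real.sqrt (3 * ((c : ℝ) ^ 2 + ((b : ℝ) * (X : ℝ)) ^ 2 + ((a : ℝ) * (X : ℝ) ^ 2) ^ 2)) :=
          Real.sqrt_le_sqrt hsq
  · -- the group part
    intro α hα u hu
    haveI : Fact p.Prime := ⟨hp⟩
    have hcard : u ^ (p - 1) = 1 := by
      have hc2 : Fintype.card (ZMod p)ˣ = p - 1 := by
        rw [ZMod.card_units_eq_totient p, Nat.totient_prime hp]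
      rw [← hc2]; exact pow_card_eq_one
    apply zpow_congr_aux u (p - 1) hcard
    have hcast : ((p - 1 : ℕ) : ℤ) = (p : ℤ) - 1 := by
      have := hp.one_lt; omega
    rw [hcast]
    refine ⟨b * m + a * ((p : ℤ) + 1 - 2 * j) - i * m ^ 2, ?_⟩
    linear_combination (-(m ^ 2 : ℤ)) * hi + (-(b * m + a * (m * x₀ + (p : ℤ) - j))) * hpd
end

section
/- There exist constants c₁, c₂ > 0 and x₀ ∈ ℕ such that for every integer x ≥ x₀ there exists a squarefree positive integer m (a product of distinct primes) satisfying x/2 < m < 2x and c₁/log log x ≤ φ(m)/m ≤ c₂/log log x, where φ is Euler's totient function. -/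
open Finset

namespace SmoothAux


lemma geom_sum_le_inv {r : ℝ} (h0 : 0 ≤ r) (h1 : r < 1) (n : ℕ) :
    ∑ k ∈ Finset.range n, r ^ k ≤ (1 - r)⁻¹ := by
  calc ∑ k ∈ Finset.range n, r ^ k
      ≤ ∑' k : ℕ, r ^ k :=
        Summable.sum_le_tsum (Finset.range n) (fun k _ => pow_nonneg h0 k)
          (summable_geometric_of_lt_one h0 h1)
    _ = (1 - r)⁻¹ := tsum_geometric_of_lt_one h0 h1

lemma harmonic_le_prod (N : ℕ) :
    ∑ n ∈ Finset.Icc 1 N, (1 : ℝ) / n ≤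
      ∏ p ∈ Nat.primesBelow (N + 1), (1 - (p : ℝ)⁻¹)⁻¹ := by
  classical
  set P := Nat.primesBelow (N + 1) with hP
  have hprime : ∀ p ∈ P, Nat.Prime p := fun p hp => Nat.prime_of_mem_primesBelow hp
  have h2le : ∀ p ∈ P, 2 ≤ p := fun p hp => (hprime p hp).two_le
  -- natural number factorization identity
  have hfac : ∀ n ∈ Finset.Icc 1 N, ∏ p ∈ P, p ^ (n.factorization p) = n := by
    intro n hn
    obtain ⟨h1, h2⟩ := Finset.mem_Icc.mp hn
    have hn0 : n ≠ 0 := by omega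
    have hid := Nat.factorization_prod_pow_eq_self hn0
    rw [Finsupp.prod] at hid
    conv_rhs => rw [← hid]
    symm
    apply Finset.prod_subset
    · intro p hp
      rw [Nat.support_factorization] at hp
      exact Nat.mem_primesBelow.mpr
        ⟨lt_of_le_of_lt (le_trans (Nat.le_of_mem_primeFactors hp) h2) (Nat.lt_succ_self N),
          Nat.prime_of_mem_primeFactors hp⟩
    · intro p _ hps
      rw [Nat.support_factorization] at hps
      have : n.factorization p = 0 := by
        by_contra h
        exact hps ((Nat.support_factorization n) ▸ Finsupp.mem_support_iff.mpr h)
      rw [this, pow_zero]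
  -- real version
  have key : ∀ n ∈ Finset.Icc 1 N,
      (1 : ℝ) / n = ∏ x ∈ P.attach, ((x.1 : ℝ)⁻¹) ^ (n.factorization x.1) := by
    intro n hn
    have h := hfac n hn
    have hR : (n : ℝ) = ∏ p ∈ P, (p : ℝ) ^ (n.factorization p) := by
      exact_mod_cast congrArg (fun k : ℕ => (k : ℝ)) h.symm
    rw [one_div, hR, ← Finset.prod_inv_distrib]
    rw [← Finset.prod_attach P (fun p => ((p : ℝ) ^ (n.factorization p))⁻¹)]
    exact Finset.prod_congr rfl fun x _ => (inv_pow _ _).symm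
  rw [Finset.sum_congr rfl key]
  set t : ℕ → Finset ℕ := fun _ => Finset.range (N + 1) with ht
  set i : ℕ → (∀ a ∈ P, ℕ) := fun n => fun p _ => n.factorization p with hi
  have hinj : Set.InjOn i (Finset.Icc 1 N) := by
    intro a ha b hb hab
    have : ∀ p ∈ P, a.factorization p = b.factorization p := by
      intro p hp
      exact congrFun (congrFun hab p) hp
    rw [← hfac a ha, ← hfac b hb]
    exact Finset.prod_congr rfl fun p hp => by rw [this p hp]
  have hsub : (Finset.Icc 1 N).image i ⊆ P.pi t := by
    intro g hg
    obtain ⟨n, hn, rfl⟩ := Finset.mem_image.mp hg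
    obtain ⟨h1, h2⟩ := Finset.mem_Icc.mp hn
    refine Finset.mem_pi.mpr fun p hp => Finset.mem_range.mpr ?_
    exact lt_of_lt_of_le (Nat.factorization_lt p (by omega)) (by omega)
  calc ∑ n ∈ Finset.Icc 1 N, ∏ x ∈ P.attach, ((x.1 : ℝ)⁻¹) ^ (n.factorization x.1)
      = ∑ g ∈ (Finset.Icc 1 N).image i,
          ∏ x ∈ P.attach, ((x.1 : ℝ)⁻¹) ^ (g x.1 x.2) := by
        rw [Finset.sum_image (fun a ha b hb h => hinj ha hb h)]
    _ ≤ ∑ g ∈ P.pi t, ∏ x ∈ P.attach, ((x.1 : ℝ)⁻¹) ^ (g x.1 x.2) := by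
        refine Finset.sum_le_sum_of_subset_of_nonneg hsub fun g _ _ => ?_
        exact Finset.prod_nonneg fun x _ => pow_nonneg (by positivity) _
    _ = ∏ p ∈ P, ∑ k ∈ Finset.range (N + 1), ((p : ℝ)⁻¹) ^ k := by
        rw [Finset.prod_sum]
    _ ≤ ∏ p ∈ P, (1 - (p : ℝ)⁻¹)⁻¹ := by
        refine Finset.prod_le_prod (fun p hp => ?_) (fun p hp => ?_)
        · exact Finset.sum_nonneg fun k _ => pow_nonneg (by positivity) _
        · have h2 : (2 : ℝ) ≤ p := by exact_mod_cast h2le p hp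
          exact geom_sum_le_inv (by positivity) (by
            rw [inv_lt_one_iff₀]; right; linarith) _



lemma log_le_prod (N : ℕ) :
    Real.log ((N : ℝ) + 1) ≤ ∏ p ∈ Nat.primesBelow (N + 1), (1 - (p : ℝ)⁻¹)⁻¹ := by
  have h1 : Real.log ((N : ℝ) + 1) ≤ ((harmonic N : ℚ) : ℝ) := by
    have := log_add_one_le_harmonic N
    rwa [Nat.cast_add, Nat.cast_one] at this
  have h2 : ((harmonic N : ℚ) : ℝ) = ∑ n ∈ Finset.Icc 1 N, (1 : ℝ) / n := by
    rw [harmonic_eq_sum_Icc]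
    push_cast
    simp [one_div]
  calc Real.log ((N : ℝ) + 1) ≤ ((harmonic N : ℚ) : ℝ) := h1
    _ = ∑ n ∈ Finset.Icc 1 N, (1 : ℝ) / n := h2
    _ ≤ ∏ p ∈ Nat.primesBelow (N + 1), (1 - (p : ℝ)⁻¹)⁻¹ := harmonic_le_prod N

lemma prod_pos_of_primes {s : Finset ℕ} (hs : ∀ p ∈ s, 2 ≤ p) :
    0 < ∏ p ∈ s, (1 - (p : ℝ)⁻¹) := by
  refine Finset.prod_pos fun p hp => ?_
  have : (2 : ℝ) ≤ p := by exact_mod_cast hs p hp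
  have : (p : ℝ)⁻¹ ≤ 2⁻¹ := by
    apply inv_anti₀ <;> linarith
  linarith

lemma prod_le_one_of_primes {s : Finset ℕ} (hs : ∀ p ∈ s, 2 ≤ p) :
    ∏ p ∈ s, (1 - (p : ℝ)⁻¹) ≤ 1 := by
  refine Finset.prod_le_one (fun p hp => ?_) (fun p hp => ?_)
  · have : (2 : ℝ) ≤ p := by exact_mod_cast hs p hp
    have : (p : ℝ)⁻¹ ≤ 2⁻¹ := by apply inv_anti₀ <;> linarith
    linarith
  · have : (0:ℝ) < p := by have := hs p hp; positivity
    have : 0 < (p:ℝ)⁻¹ := by positivity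
    linarith

lemma exp_neg_le_one_sub {u : ℝ} (h0 : 0 ≤ u) (h : u ≤ 1 / 2) :
    Real.exp (-(2 * u)) ≤ 1 - u := by
  have h1 : 1 + 2 * u ≤ Real.exp (2 * u) := by
    have := Real.add_one_le_exp (2 * u); linarith
  have h2 : (1 - u) * (1 + 2 * u) ≥ 1 := by nlinarith
  have h3 : 0 < 1 + 2 * u := by linarith
  rw [Real.exp_neg]
  rw [inv_le_comm₀ (Real.exp_pos _) (by linarith : (0:ℝ) < 1 - u)]
  calc (1 - u)⁻¹ ≤ 1 + 2*u := by
        rw [inv_eq_one_div, div_le_iff₀ (by linarith : (0:ℝ) < 1 - u)]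
        nlinarith
    _ ≤ Real.exp (2*u) := h1

lemma exp_neg_sum_le_prod {s : Finset ℕ} (hs : ∀ p ∈ s, 2 ≤ p) :
    Real.exp (-∑ p ∈ s, 2 / (p : ℝ)) ≤ ∏ p ∈ s, (1 - (p : ℝ)⁻¹) := by
  rw [← Finset.sum_neg_distrib, Real.exp_sum]
  refine Finset.prod_le_prod (fun p _ => (Real.exp_pos _).le) (fun p hp => ?_)
  have h2 : (2 : ℝ) ≤ p := by exact_mod_cast hs p hp
  have h2' : (0:ℝ) < p := by linarith
  have hu : (p:ℝ)⁻¹ ≤ 1/2 := by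
    have : (p:ℝ)⁻¹ ≤ 2⁻¹ := inv_anti₀ (by norm_num) h2
    linarith [this]
  have := exp_neg_le_one_sub (u := (p:ℝ)⁻¹) (by positivity) hu
  have heq : -(2 / (p:ℝ)) = -(2 * (p:ℝ)⁻¹) := by ring
  rw [heq]
  exact this

lemma squarefree_prod_primes {s : Finset ℕ} (hs : ∀ p ∈ s, Nat.Prime p) :
    Squarefree (∏ p ∈ s, p) := by
  classical
  induction s using Finset.induction with
  | empty => simpa using squarefree_one
  | @insert a s' h ih =>
    rw [Finset.prod_insert h]
    have ha := hs a (Finset.mem_insert_self a s')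
    have hs' : ∀ p ∈ s', Nat.Prime p := fun p hp => hs p (Finset.mem_insert_of_mem hp)
    refine (Nat.squarefree_mul ?_).mpr ⟨ha.squarefree, ih hs'⟩
    refine Nat.Coprime.prod_right fun p hp => ?_
    exact (Nat.coprime_primes ha (hs' p hp)).mpr (by rintro rfl; exact h hp)

end SmoothAux


open SmoothAux

set_option maxHeartbeats 2000000 in
/-- Lemma 2.7 (existence form): there are constants `c₁, c₂ > 0` such that for all
sufficiently large `x`, there is a squarefree positive integer `m` with `x/2 < m < 2x`
and `c₁/log log x ≤ φ(m)/m ≤ c₂/log log x`. -/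
theorem exists_smooth_modulus :
    ∃ c₁ c₂ : ℝ, 0 < c₁ ∧ 0 < c₂ ∧ ∃ x₀ : ℕ, ∀ x : ℕ, x₀ ≤ x →
      ∃ m : ℕ, 0 < m ∧ Squarefree m ∧
        (x : ℝ) / 2 < (m : ℝ) ∧ (m : ℝ) < 2 * (x : ℝ) ∧
        c₁ / Real.log (Real.log x) ≤ (Nat.totient m : ℝ) / (m : ℝ) ∧
        (Nat.totient m : ℝ) / (m : ℝ) ≤ c₂ / Real.log (Real.log x) := by
  classical
  refine ⟨1/4, Real.exp 200, by norm_num, Real.exp_pos 200,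
    ⌈Real.exp (Real.exp 100)⌉₊ + 1, fun x hx => ?_⟩
  -- basic size facts
  have hxR : Real.exp (Real.exp 100) ≤ (x : ℝ) := by
    refine (Nat.le_ceil _).trans ?_
    exact_mod_cast Nat.cast_le.mpr (le_trans (Nat.le_succ _) hx)
  have hx16 : (16 : ℕ) ≤ x := by
    have h1 : (100 : ℝ) + 1 ≤ Real.exp 100 := by
      have := Real.add_one_le_exp (100 : ℝ); linarith
    have h2 : Real.exp 100 + 1 ≤ Real.exp (Real.exp 100) := by
      have := Real.add_one_le_exp (Real.exp 100); linarith
    have : (16 : ℝ) ≤ (x : ℝ) := by linarith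
    exact_mod_cast this
  have hx0 : (0 : ℝ) < x := by positivity
  set ℓ : ℝ := Real.log x with hℓdef
  have hℓ : Real.exp 100 ≤ ℓ := by
    rw [hℓdef, ← Real.log_exp (Real.exp 100)]
    exact Real.log_le_log (Real.exp_pos _) hxR
  have hℓ101 : (101 : ℝ) ≤ ℓ := by
    have := Real.add_one_le_exp (100 : ℝ); linarith
  have hℓpos : (0 : ℝ) < ℓ := by linarith
  set L : ℝ := Real.log ℓ with hLdef
  have hL : (100 : ℝ) ≤ L := by
    rw [hLdef, ← Real.log_exp (100 : ℝ)]
    exact Real.log_le_log (Real.exp_pos _) hℓ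
  have hLpos : (0 : ℝ) < L := by linarith
  have hexpL : Real.exp L = ℓ := Real.exp_log hℓpos
  have hℓ25L : 25 * L ≤ ℓ := by
    have h1 : Real.exp (L/2) * Real.exp (L/2) = Real.exp L := by
      rw [← Real.exp_add]; ring_nf
    have h2 : 1 + L/2 ≤ Real.exp (L/2) := by
      have := Real.add_one_le_exp (L/2); linarith
    nlinarith [Real.exp_pos (L/2)]
  have hlog10L : Real.log (10 * L) ≤ L / 2 := by
    have h10 : Real.log (10 : ℝ) ≤ 9 := by
      have := Real.log_le_sub_one_of_pos (by norm_num : (0:ℝ) < 10); linarith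
    have hsq : Real.sqrt L ^ 2 = L := Real.sq_sqrt hLpos.le
    have hsq10 : (10 : ℝ) ≤ Real.sqrt L := by
      rw [show (10:ℝ) = Real.sqrt 100 by
        rw [show (100:ℝ) = 10^2 by norm_num, Real.sqrt_sq (by norm_num)]]
      exact Real.sqrt_le_sqrt hL
    have hlogL : Real.log L ≤ 2 * (Real.sqrt L - 1) := by
      have h1 : Real.log (Real.sqrt L) = Real.log L / 2 := Real.log_sqrt hLpos.le
      have h2 := Real.log_le_sub_one_of_pos (show (0:ℝ) < Real.sqrt L by linarith)
      linarith
    rw [Real.log_mul (by norm_num) (by linarith)]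
    nlinarith [hsq, hsq10]
  -- the truncated Euler product
  set F : ℕ → ℝ := fun k => ∏ p ∈ Nat.primesBelow k, (1 - (p : ℝ)⁻¹) with hFdef
  have hpb2 : ∀ k : ℕ, ∀ p ∈ Nat.primesBelow k, 2 ≤ p :=
    fun k p hp => (Nat.prime_of_mem_primesBelow hp).two_le
  have hFpos : ∀ k, 0 < F k := fun k => prod_pos_of_primes (hpb2 k)
  have hpbmono : ∀ {j k : ℕ}, j ≤ k → Nat.primesBelow j ⊆ Nat.primesBelow k :=
    fun {j k} h p hp => Nat.mem_primesBelow.mpr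
      ⟨lt_of_lt_of_le (Nat.lt_of_mem_primesBelow hp) h, Nat.prime_of_mem_primesBelow hp⟩
  have hFanti : ∀ {j k : ℕ}, j ≤ k → F k ≤ F j := by
    intro j k hjk
    have hsub := hpbmono hjk
    calc F k = (∏ p ∈ Nat.primesBelow k \ Nat.primesBelow j, (1 - (p:ℝ)⁻¹)) * F j :=
          (Finset.prod_sdiff hsub).symm
      _ ≤ 1 * F j := by
          refine mul_le_mul_of_nonneg_right ?_ (hFpos j).le
          exact prod_le_one_of_primes fun p hp => hpb2 k p (Finset.mem_sdiff.mp hp).1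
      _ = F j := one_mul _
  -- existence of the cutoff
  set N : ℕ := ⌈ℓ⌉₊ with hNdef
  have hNℓ : ℓ ≤ (N : ℝ) := Nat.le_ceil ℓ
  have hNup : (N : ℝ) < ℓ + 1 := Nat.ceil_lt_add_one hℓpos.le
  have hFN : F (N + 1) ≤ 1 / L := by
    have hlog : L ≤ Real.log ((N : ℝ) + 1) := by
      rw [hLdef]
      exact Real.log_le_log hℓpos (by linarith)
    have hprod := (hlog.trans (log_le_prod N))
    have hinv : F (N+1) = (∏ p ∈ Nat.primesBelow (N+1), (1 - (p:ℝ)⁻¹)⁻¹)⁻¹ := by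
      rw [← Finset.prod_inv_distrib]
      simp [hFdef]
    rw [hinv, one_div]
    exact inv_anti₀ hLpos hprod
  have hex : ∃ k, F k ≤ 1 / L := ⟨N + 1, hFN⟩
  set K : ℕ := Nat.find hex with hKdef
  have hFK : F K ≤ 1 / L := Nat.find_spec hex
  have hKmin : ∀ j < K, 1 / L < F j := fun j hj => not_le.mp (Nat.find_min hex hj)
  have hKle : K ≤ N + 1 := Nat.find_min' hex hFN
  have hK0 : K ≠ 0 := by
    intro h
    have hF0 : F 0 = 1 := by simp [hFdef]
    have := hFK
    rw [h, hF0] at this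
    have : 1 / L ≥ 1 := this
    have : 1 / L ≤ 1 / 100 := by
      rw [div_le_div_iff₀ hLpos (by norm_num)]; linarith
    linarith
  have hKreal : (K : ℝ) ≤ ℓ + 2 := by
    have : (K : ℝ) ≤ (N : ℝ) + 1 := by exact_mod_cast hKle
    linarith
  -- lower bound for F K
  have hFKlb : 1 / (2 * L) ≤ F K := by
    obtain ⟨J, hJ⟩ : ∃ J, K = J + 1 := ⟨K - 1, by omega⟩
    have hFJ : 1 / L < F J := hKmin J (by omega)
    rw [hJ]
    have hstep : F (J + 1) = if J.Prime then (1 - (J:ℝ)⁻¹) * F J else F J := by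
      simp only [hFdef, Nat.primesBelow_succ]
      split_ifs with h
      · rw [Finset.prod_insert (Nat.notMem_primesBelow J)]
      · rfl
    rw [hstep]
    split_ifs with h
    · have hJ2 : (2 : ℝ) ≤ (J : ℝ) := by exact_mod_cast h.two_le
      have : (1:ℝ)/2 ≤ 1 - (J:ℝ)⁻¹ := by
        have : (J:ℝ)⁻¹ ≤ 2⁻¹ := inv_anti₀ (by norm_num) hJ2
        norm_num at this ⊢
        linarith
      calc 1 / (2*L) = (1/2) * (1/L) := by ring
        _ ≤ (1 - (J:ℝ)⁻¹) * F J := by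
            apply mul_le_mul this hFJ.le (by positivity) (by linarith)
    · calc 1/(2*L) ≤ 1/L := by
                rw [div_le_div_iff₀ (by positivity) hLpos]; nlinarith
        _ ≤ F J := hFJ.le
  clear_value K N
  -- the prime product
  set P : ℕ → ℕ := fun k => ∏ p ∈ Nat.primesBelow k, p with hPdef
  have hPpos : ∀ k, 0 < P k :=
    fun k => Finset.prod_pos fun p hp => by have := hpb2 k p hp; omega
  have hP4 : ∀ k, P k ≤ 4 ^ k := by
    intro k
    cases k with
    | zero => simp [hPdef]
    | succ j =>
      have heq : P (j+1) = primorial j := rfl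
      rw [heq]
      exact (primorial_le_4_pow j).trans (Nat.pow_le_pow_right (by norm_num) (by omega))
  -- the size cutoff
  set s : ℕ := Nat.sqrt x with hsdef
  have hs4 : 4 ≤ s := by
    rw [hsdef]
    exact Nat.le_sqrt.mpr (by omega)
  have hss1 : s * s ≤ x := by simpa [pow_two] using Nat.sqrt_le' x
  have hxss : x < (s+1)^2 := Nat.lt_succ_sqrt' x
  have hsx : s ≤ x := Nat.sqrt_le_self x
  clear_value s
  set T : ℕ := Nat.findGreatest (fun t => 2 * P t ≤ s) K with hTdef
  have hTle : T ≤ K := Nat.findGreatest_le K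
  have hTs : 2 * P T ≤ s := by
    rcases eq_or_ne T 0 with h | h
    · rw [h]; simpa [hPdef] using (by omega : 2 * 1 ≤ s)
    · exact Nat.findGreatest_of_ne_zero (P := fun t => 2 * P t ≤ s) hTdef.symm h
  have hTmax : ∀ t, t ≤ K → 2 * P t ≤ s → t ≤ T :=
    fun t h1 h2 => Nat.le_findGreatest h1 h2
  clear_value T
  -- Bertrand prime
  set n₀ : ℕ := x / (2 * P T) with hn₀def
  have h2PTx : 2 * P T ≤ x := hTs.trans hsx
  have hn₀pos : 0 < n₀ := Nat.div_pos h2PTx (by have := hPpos T; omega)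
  obtain ⟨q, hq, hqgt, hqle⟩ := Nat.exists_prime_lt_and_le_two_mul n₀ (by omega)
  set m : ℕ := P T * q with hmdef
  have hmpos : 0 < m := Nat.mul_pos (hPpos T) hq.pos
  -- size bounds
  have hmx : m ≤ x := by
    calc m = P T * q := rfl
      _ ≤ P T * (2 * n₀) := Nat.mul_le_mul_left _ hqle
      _ = 2 * P T * n₀ := by ring
      _ ≤ x := by
          rw [hn₀def, mul_comm]
          exact Nat.div_mul_le_self x _
  have hx2m : x < 2 * m := by
    have h1 : 2 * P T * n₀ + x % (2 * P T) = x := Nat.div_add_mod x (2 * P T)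
    have h2 : x % (2 * P T) < 2 * P T := Nat.mod_lt x (by have := hPpos T; omega)
    have h3 : x < 2 * P T * (n₀ + 1) := by
      have : 2 * P T * (n₀ + 1) = 2 * P T * n₀ + 2 * P T := by ring
      omega
    have h4 : 2 * P T * (n₀ + 1) ≤ 2 * P T * q := Nat.mul_le_mul_left _ (by omega)
    have h5 : 2 * P T * q = 2 * m := by rw [hmdef]; ring
    omega
  -- q is bigger than everything in P T
  have hsq : s < q := by
    have hxs : x / s ≤ n₀ := Nat.div_le_div_left hTs (by have := hPpos T; omega)
    have hss : s ≤ x / s := by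
      rw [Nat.le_div_iff_mul_le (by omega)]
      exact hss1
    omega
  have hPq : P T < q := by
    have : P T < 2 * P T := by have := hPpos T; omega
    omega
  have hqmem : ∀ p ∈ Nat.primesBelow T, p < q := by
    intro p hp
    have hdvd : p ∣ P T := Finset.dvd_prod_of_mem _ hp
    have := Nat.le_of_dvd (hPpos T) hdvd
    omega
  have hqnotmem : q ∉ Nat.primesBelow T := fun h => absurd (hqmem q h) (lt_irrefl q)
  have hqndvd : ¬ q ∣ P T := fun h => absurd (Nat.le_of_dvd (hPpos T) h) (by omega)
  -- squarefree
  have hPsf : Squarefree (P T) :=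
    squarefree_prod_primes fun p hp => Nat.prime_of_mem_primesBelow hp
  have hcop : Nat.Coprime (P T) q :=
    Nat.Coprime.symm ((Nat.Prime.coprime_iff_not_dvd hq).mpr hqndvd)
  have hmsf : Squarefree m := (Nat.squarefree_mul hcop).mpr ⟨hPsf, hq.squarefree⟩
  -- prime factors and totient ratio
  have hmf : m.primeFactors = Nat.primesBelow T ∪ {q} := by
    rw [hmdef, Nat.primeFactors_mul (hPpos T).ne' hq.pos.ne',
      Nat.primeFactors_prod (fun p hp => Nat.prime_of_mem_primesBelow hp),
      Nat.Prime.primeFactors hq]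
  have hratio : (Nat.totient m : ℝ) / m = (1 - (q:ℝ)⁻¹) * F T := by
    have hQ := Nat.totient_eq_mul_prod_factors m
    have hR := congrArg (fun r : ℚ => (r : ℝ)) hQ
    push_cast at hR
    have hprod : ∏ p ∈ m.primeFactors, (1 - (p:ℝ)⁻¹) = (1 - (q:ℝ)⁻¹) * F T := by
      rw [hmf, Finset.prod_union (Finset.disjoint_singleton_right.mpr hqnotmem),
        Finset.prod_singleton]
      ring
    rw [div_eq_iff (by positivity : (m:ℝ) ≠ 0), hR, hprod]
    ring
  -- lower bound
  have hq2 : (2:ℝ) ≤ q := by exact_mod_cast hq.two_le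
  have hqfac : (1:ℝ)/2 ≤ 1 - (q:ℝ)⁻¹ := by
    have : (q:ℝ)⁻¹ ≤ 2⁻¹ := inv_anti₀ (by norm_num) hq2
    norm_num at this ⊢; linarith
  have hqfac1 : 1 - (q:ℝ)⁻¹ ≤ 1 := by
    have : (0:ℝ) < (q:ℝ)⁻¹ := by positivity
    linarith
  have hlower : (1/4) / L ≤ (Nat.totient m : ℝ) / m := by
    rw [hratio]
    have hFT : F K ≤ F T := hFanti hTle
    calc (1/4)/L = (1/2) * (1/(2*L)) := by ring
      _ ≤ (1 - (q:ℝ)⁻¹) * F T := by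
          apply mul_le_mul hqfac (hFKlb.trans hFT) (by positivity) (by linarith)
  -- upper bound
  have hupper : (Nat.totient m : ℝ) / m ≤ Real.exp 200 / L := by
    rw [hratio]
    have hFTub : F T ≤ Real.exp 160 / L := by
      rcases eq_or_lt_of_le hTle with hTK | hTK
      · rw [hTK]
        calc F K ≤ 1/L := hFK
          _ ≤ Real.exp 160 / L :=
              (div_le_div_iff_of_pos_right hLpos).mpr (Real.one_le_exp (by norm_num))
      · -- T < K : removal estimate
        have hsP : s < 2 * P (T+1) := by
          by_contra hcon
          have := hTmax (T+1) (by omega) (by omega)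
          omega
        have hcard : (Nat.primesBelow (T+1)).card ≤ T+1 := by
          calc (Nat.primesBelow (T+1)).card ≤ (Finset.range (T+1)).card :=
                Finset.card_le_card (Finset.filter_subset _ _)
            _ = T+1 := Finset.card_range _
        have hPT1 : P (T+1) ≤ (T+1)^(T+1) := by
          calc P (T+1) ≤ (T+1) ^ (Nat.primesBelow (T+1)).card :=
                Finset.prod_le_pow_card _ _ _ (fun p hp => by
                  have := Nat.lt_of_mem_primesBelow hp; omega)
            _ ≤ (T+1)^(T+1) := Nat.pow_le_pow_right (by omega) hcard
        have hsR : (s:ℝ) < 2 * ((T:ℝ)+1)^(T+1) := by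
          have h1 : (s:ℝ) < 2 * (P (T+1) : ℝ) := by exact_mod_cast hsP
          have h2 : ((P (T+1) : ℕ):ℝ) ≤ ((T:ℝ)+1)^(T+1) := by exact_mod_cast hPT1
          linarith
        have hsqrtx : Real.sqrt x ≤ (s:ℝ) + 1 := by
          have h0 : x < (s+1)^2 := hxss
          have h1 : (x:ℝ) ≤ ((s:ℝ)+1)^2 := by
            have h0' : (x:ℝ) ≤ (((s+1)^2 : ℕ) : ℝ) := by exact_mod_cast h0.le
            push_cast at h0'; linarith
          calc Real.sqrt x ≤ Real.sqrt (((s:ℝ)+1)^2) := Real.sqrt_le_sqrt h1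
            _ = (s:ℝ)+1 := Real.sqrt_sq (by positivity)
        have hTT1pos : (0:ℝ) < (T:ℝ)+1 := by positivity
        have hp1 : (1:ℝ) ≤ ((T:ℝ)+1)^(T+1) := one_le_pow₀ (by linarith)
        have hlog4 : Real.log 4 ≤ 3 := by
          have := Real.log_le_sub_one_of_pos (by norm_num : (0:ℝ) < 4); linarith
        have hlogTT : ℓ/2 ≤ Real.log 4 + ((T:ℝ)+1) * Real.log ((T:ℝ)+1) := by
          have h1 : Real.sqrt x ≤ 4 * ((T:ℝ)+1)^(T+1) := by linarith
          have h2 : Real.log (Real.sqrt x) ≤ Real.log (4 * ((T:ℝ)+1)^(T+1)) :=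
            Real.log_le_log (Real.sqrt_pos.mpr hx0) h1
          rw [Real.log_sqrt hx0.le, Real.log_mul (by norm_num) (by positivity),
            Real.log_pow] at h2
          push_cast at h2
          linarith
        have hTTlb : 0.4 * ℓ ≤ ((T:ℝ)+1) * Real.log ((T:ℝ)+1) := by
          norm_num
          linarith
        have hTreal : (T:ℝ)+1 ≤ ℓ + 2 := by
          have h1 : (T:ℝ) + 1 ≤ (K:ℝ) := by exact_mod_cast hTK
          linarith
        have hlog2 : Real.log 2 ≤ 1 := by
          have := Real.log_le_sub_one_of_pos (by norm_num : (0:ℝ) < 2); linarith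
        have hlogTub : Real.log ((T:ℝ)+1) ≤ 2*L := by
          have h1 : Real.log ((T:ℝ)+1) ≤ Real.log (2*ℓ) :=
            Real.log_le_log hTT1pos (by linarith)
          rw [Real.log_mul (by norm_num) hℓpos.ne'] at h1
          have : Real.log ℓ = L := rfl
          linarith
        have hT1lb : ℓ/(5*L) ≤ (T:ℝ)+1 := by
          have hlogTT1pos : 0 ≤ Real.log ((T:ℝ)+1) := Real.log_nonneg (by linarith)
          have h1 : 0.4*ℓ ≤ ((T:ℝ)+1) * (2*L) := by nlinarith
          rw [div_le_iff₀ (by positivity)]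
          nlinarith
        have hAle : ℓ/(10*L) ≤ (T:ℝ) := by
          have hA1 : (1:ℝ) ≤ ℓ/(10*L) := by
            rw [le_div_iff₀ (by positivity)]; nlinarith
          have h2 : ℓ/(5*L) = 2 * (ℓ/(10*L)) := by field_simp; ring
          nlinarith
        have hApos : (0:ℝ) < ℓ/(10*L) := by positivity
        have hlogA : L/2 ≤ Real.log (ℓ/(10*L)) := by
          rw [Real.log_div hℓpos.ne' (by positivity)]
          have : Real.log ℓ = L := rfl
          linarith
        set R : Finset ℕ := Nat.primesBelow K \ Nat.primesBelow T with hRdef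
        have hR2 : ∀ p ∈ R, 2 ≤ p := fun p hp => hpb2 K p (Finset.mem_sdiff.mp hp).1
        have hRge : ∀ p ∈ R, (ℓ/(10*L)) ≤ (p:ℝ) := by
          intro p hp
          obtain ⟨hpK, hpT⟩ := Finset.mem_sdiff.mp hp
          have hprime := Nat.prime_of_mem_primesBelow hpK
          have hpT' : T ≤ p := by
            by_contra hcon
            exact hpT (Nat.mem_primesBelow.mpr ⟨by omega, hprime⟩)
          have h1 : (T:ℝ) ≤ p := by exact_mod_cast hpT'
          linarith
        have hsumlog : ∑ p ∈ R, Real.log p ≤ 4*ℓ := by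
          have h1 : ∑ p ∈ R, Real.log (p:ℝ) = Real.log (∏ p ∈ R, (p:ℝ)) :=
            (Real.log_prod (fun p hp => by
              have := hR2 p hp; positivity)).symm
          have h2 : (∏ p ∈ R, p : ℕ) ≤ P K := by
            apply Finset.prod_le_prod_of_subset_of_one_le' Finset.sdiff_subset
            intro p hpK _
            have := hpb2 K p hpK; omega
          have h3 : P K ≤ 4^K := hP4 K
          have hprodpos : (0:ℝ) < ∏ p ∈ R, (p:ℝ) :=
            Finset.prod_pos fun p hp => by have := hR2 p hp; positivity
          have h4 : Real.log (∏ p ∈ R, (p:ℝ)) ≤ Real.log ((4:ℝ)^K) := by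
            apply Real.log_le_log hprodpos
            calc ∏ p ∈ R, (p:ℝ) = ((∏ p ∈ R, p : ℕ) : ℝ) := by push_cast; rfl
              _ ≤ ((4^K : ℕ) : ℝ) := by exact_mod_cast h2.trans h3
              _ = (4:ℝ)^K := by push_cast; rfl
          rw [Real.log_pow] at h4
          have hlog4pos : 0 ≤ Real.log 4 := Real.log_nonneg (by norm_num)
          have hK0' : (0:ℝ) ≤ (K:ℝ) := by positivity
          have h5 : (K:ℝ) * Real.log 4 ≤ (ℓ+2)*3 := by nlinarith
          rw [h1]
          nlinarith
        have hsum2p : ∑ p ∈ R, 2/(p:ℝ) ≤ 160 := by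
          have key : ∀ p ∈ R, 2/(p:ℝ) ≤ 40 * Real.log p / ℓ := by
            intro p hp
            have hpA := hRge p hp
            have hp0 : (0:ℝ) < p := lt_of_lt_of_le hApos hpA
            have hlogp : L/2 ≤ Real.log p :=
              hlogA.trans (Real.log_le_log hApos hpA)
            have hplogp : ℓ/20 ≤ (p:ℝ) * Real.log p := by
              have heq : (ℓ/(10*L)) * (L/2) = ℓ/20 := by
                field_simp
                ring
              rw [← heq]
              apply mul_le_mul hpA hlogp (by linarith) hp0.le
            rw [div_le_div_iff₀ hp0 hℓpos]
            nlinarith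
          calc ∑ p ∈ R, 2/(p:ℝ) ≤ ∑ p ∈ R, 40 * Real.log p / ℓ :=
                Finset.sum_le_sum key
            _ = (40/ℓ) * ∑ p ∈ R, Real.log p := by
                rw [Finset.mul_sum]
                exact Finset.sum_congr rfl fun p _ => by ring
            _ ≤ (40/ℓ) * (4*ℓ) := by
                apply mul_le_mul_of_nonneg_left hsumlog (by positivity)
            _ = 160 := by field_simp; ring
        have hprodR : Real.exp (-(160:ℝ)) ≤ ∏ p ∈ R, (1 - (p:ℝ)⁻¹) := by
          refine le_trans ?_ (exp_neg_sum_le_prod hR2)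
          exact Real.exp_le_exp.mpr (by linarith)
        have hsplit : (∏ p ∈ R, (1 - (p:ℝ)⁻¹)) * F T = F K :=
          Finset.prod_sdiff (hpbmono hTle)
        have hpRpos : (0:ℝ) < ∏ p ∈ R, (1 - (p:ℝ)⁻¹) := prod_pos_of_primes hR2
        have hFTexpr : F K * (∏ p ∈ R, (1 - (p:ℝ)⁻¹))⁻¹ = F T := by
          rw [← hsplit, mul_comm _ (F T), mul_assoc, mul_inv_cancel₀ hpRpos.ne', mul_one]
        rw [← hFTexpr]
        have hinv : (∏ p ∈ R, (1 - (p:ℝ)⁻¹))⁻¹ ≤ Real.exp 160 := by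
          rw [inv_le_comm₀ hpRpos (Real.exp_pos _), ← Real.exp_neg]
          exact hprodR
        calc F K * (∏ p ∈ R, (1 - (p:ℝ)⁻¹))⁻¹ ≤ (1/L) * Real.exp 160 :=
              mul_le_mul hFK hinv (inv_nonneg.mpr hpRpos.le) (one_div_nonneg.mpr hLpos.le)
          _ = Real.exp 160 / L := by ring
    calc (1 - (q:ℝ)⁻¹) * F T ≤ 1 * F T :=
          mul_le_mul_of_nonneg_right hqfac1 (hFpos T).le
      _ = F T := one_mul _
      _ ≤ Real.exp 160 / L := hFTub
      _ ≤ Real.exp 200 / L :=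
          (div_le_div_iff_of_pos_right hLpos).mpr (Real.exp_le_exp.mpr (by norm_num))
  refine ⟨m, hmpos, hmsf, ?_, ?_, hlower, hupper⟩
  · have : (x:ℝ) < 2 * m := by exact_mod_cast hx2m
    linarith
  · have h1 : (m:ℝ) ≤ x := by exact_mod_cast hmx
    linarith
end
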